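/- Let W be the bivariate formal power series over ℚ in variables x and y whose coefficient of x^n y^k (for n ≥ 1, k ≥ 0) is the number of Catalan words of length n with exactly k runs of weak ascents, and whose coefficient of x^0 y^k is 0 for all k. Then W satisfies the functional equation W = x·y + 2·x·W + x·W². -/

import Mathlib

/-- The set of Catalan words of length `n`: words `w` over ℕ with `w 1 = 0` and
`w (i+1) ≤ w i + 1` for all `i`. -/
def CatalanWord (n : ℕ) : Set (List ℕ) :=
  {w | w.length = n ∧ w.getD 0 0 = 0 ∧
    ∀ i, i + 1 < n → w.getD (i + 1) 0 ≤ w.getD i 0 + 1}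

/-- Number of runs of weak ascents of `w`: `1 + #{i : w i > w (i+1)}`. -/
def wAscRuns (w : List ℕ) : ℕ :=
  1 + ((Finset.range (w.length - 1)).filter
    (fun i => w.getD (i + 1) 0 < w.getD i 0)).card

namespace CatAux

/-- number of descents of a word -/
def desc : List ℕ → ℕ
  | a :: b :: t => (if b < a then 1 else 0) + desc (b :: t)
  | _ => 0

lemma desc_cons (a : ℕ) (t : List ℕ) :
    desc (a :: t) = (if t.headD a < a then 1 else 0) + desc t := by
  cases t with
  | nil => simp [desc]
  | cons b s => rfl

/-- the Catalan property -/
def cat (w : List ℕ) : Prop := w.Chain' (fun a b => b ≤ a + 1) ∧ w.headD 0 = 0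

instance : DecidablePred cat := fun w => by unfold cat; unfold List.Chain'; exact inferInstance

lemma cat_nil : cat [] := ⟨List.isChain_nil, rfl⟩

lemma wAscRuns_eq (w : List ℕ) : wAscRuns w = 1 + desc w := by
  unfold wAscRuns
  congr 1
  rw [Finset.card_filter]
  induction w with
  | nil => simp [desc]
  | cons a t ih =>
    cases t with
    | nil => simp [desc]
    | cons b s =>
      rw [show (a :: b :: s).length - 1 = ((b :: s).length - 1) + 1 by
        simp, Finset.sum_range_succ']
      simp only [List.getD_cons_succ] at ih ⊢
      rw [ih]
      simp only [List.getD_cons_zero]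
      rw [desc, add_comm]

lemma mem_catalanWord {w : List ℕ} {n : ℕ} :
    w ∈ CatalanWord n ↔ w.length = n ∧ cat w := by
  constructor
  · rintro ⟨hl, hh, hc⟩
    refine ⟨hl, ?_, ?_⟩
    · rw [List.Chain', List.isChain_iff_getElem]
      intro i hi
      have h1 : i + 1 < n := by omega
      have := hc i h1
      rw [List.getD_eq_getElem w 0 (show i+1 < w.length by omega), List.getD_eq_getElem w 0 (show i < w.length by omega)] at this
      exact this
    · cases w with
      | nil => rfl
      | cons a t => simpa using hh
  · rintro ⟨hl, hc, hh⟩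
    refine ⟨hl, ?_, ?_⟩
    · cases w with
      | nil => rfl
      | cons a t => simpa using hh
    · intro i hi
      rw [List.getD_eq_getElem w 0 (show i+1 < w.length by omega), List.getD_eq_getElem w 0 (show i < w.length by omega)]
      rw [List.Chain', List.isChain_iff_getElem] at hc
      have := hc i (by omega)
      exact this

lemma chain_bound : ∀ (w : List ℕ) (c : ℕ), w.Chain' (fun a b => b ≤ a + 1) →
    w.headD 0 ≤ c → ∀ x ∈ w, x < c + w.length
  | [], _, _, _ => by simp
  | a :: t, c, hc, hh => by
    intro x hx
    rcases List.mem_cons.mp hx with rfl | hx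
    · have : x ≤ c := hh
      simp only [List.length_cons]; omega
    · have hct : t.Chain' (fun a b => b ≤ a + 1) := hc.tail
      have hht : t.headD 0 ≤ a + 1 := by
        cases t with
        | nil => simp
        | cons b s =>
          have := List.isChain_cons_cons.mp hc
          simpa using this.1
      have := chain_bound t (c + 1) hct (le_trans hht (by simpa using hh)) x hx
      simp only [List.length_cons]; omega

lemma cat_bound {w : List ℕ} (hw : cat w) : ∀ x ∈ w, x < w.length := by
  intro x hx
  simpa using chain_bound w 0 hw.1 (le_of_eq hw.2) x hx

lemma desc_map_add : ∀ l : List ℕ, desc (l.map (· + 1)) = desc l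
  | [] => rfl
  | [a] => rfl
  | a :: b :: t => by
    have := desc_map_add (b :: t)
    simp only [List.map_cons] at this ⊢
    rw [desc, desc, this]
    congr 1
    simp

lemma desc_map_sub : ∀ l : List ℕ, (∀ x ∈ l, x ≠ 0) → desc (l.map (· - 1)) = desc l
  | [], _ => rfl
  | [a], _ => rfl
  | a :: b :: t, h => by
    have ha : a ≠ 0 := h a (by simp)
    have hb : b ≠ 0 := h b (by simp)
    have := desc_map_sub (b :: t) (fun x hx => h x (List.mem_cons_of_mem a hx))
    simp only [List.map_cons] at this ⊢
    rw [desc, desc, this]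
    congr 1
    have : b - 1 < a - 1 ↔ b < a := by omega
    simp [this]

lemma desc_append : ∀ (p v : List ℕ), (∀ x ∈ p, x ≠ 0) → v.headD 0 = 0 →
    desc (p ++ v) = desc p + desc v + (if p = [] ∨ v = [] then 0 else 1)
  | [], v, _, _ => by simp [desc]
  | [a], v, hp, hv => by
    cases v with
    | nil => simp [desc]
    | cons b t =>
      have hb : b = 0 := by simpa using hv
      have ha : a ≠ 0 := hp a (by simp)
      subst hb
      simp only [List.cons_append, List.nil_append, desc]
      have : (0 : ℕ) < a := Nat.pos_of_ne_zero ha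
      simp [this, desc]
      omega
  | a :: b :: p', v, hp, hv => by
    have ih := desc_append (b :: p') v (fun x hx => hp x (List.mem_cons_of_mem a hx)) hv
    simp only [List.cons_append] at ih ⊢
    rw [desc, ih, desc]
    by_cases hv0 : v = [] <;> simp [hv0] <;> omega

/-- all lists of length n with entries < n -/
def allW (n : ℕ) : Finset (List ℕ) :=
  (Finset.univ : Finset (Fin n → Fin n)).image (fun f => (List.ofFn f).map Fin.val)

lemma length_of_mem_allW {w : List ℕ} {n : ℕ} (h : w ∈ allW n) : w.length = n := by
  simp only [allW, Finset.mem_image] at h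
  obtain ⟨f, _, rfl⟩ := h
  simp

lemma mem_allW {w : List ℕ} {n : ℕ} (hl : w.length = n) (hb : ∀ x ∈ w, x < n) :
    w ∈ allW n := by
  subst hl
  simp only [allW, Finset.mem_image]
  refine ⟨fun i => ⟨w[(i : ℕ)], hb _ (List.getElem_mem _)⟩, Finset.mem_univ _, ?_⟩
  apply List.ext_getElem
  · simp
  · intro i h1 h2
    simp

def CWf (n k : ℕ) : Finset (List ℕ) :=
  (allW n).filter (fun w => cat w ∧ 1 + desc w = k)

lemma mem_CWf {w : List ℕ} {n k : ℕ} :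
    w ∈ CWf n k ↔ w.length = n ∧ cat w ∧ 1 + desc w = k := by
  constructor
  · intro h
    rw [CWf, Finset.mem_filter] at h
    exact ⟨length_of_mem_allW h.1, h.2⟩
  · rintro ⟨hl, hc, hk⟩
    rw [CWf, Finset.mem_filter]
    exact ⟨mem_allW hl (by rw [← hl]; exact cat_bound hc), hc, hk⟩

def c (n k : ℕ) : ℕ := (CWf n k).card
def c' (n k : ℕ) : ℕ := if n = 0 then 0 else c n k

def allLe (n : ℕ) : Finset (List ℕ) := (Finset.range (n+1)).biUnion allW

lemma mem_allLe {w : List ℕ} {n : ℕ} (hl : w.length ≤ n) (hc : cat w) : w ∈ allLe n := by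
  rw [allLe, Finset.mem_biUnion]
  exact ⟨w.length, Finset.mem_range.mpr (by omega), mem_allW rfl (cat_bound hc)⟩

def SP (n k : ℕ) : Finset (List ℕ × List ℕ) :=
  ((allLe n) ×ˢ (allLe n)).filter (fun q => cat q.1 ∧ cat q.2 ∧
    q.1.length + q.2.length = n - 1 ∧
    1 + (desc q.1 + desc q.2 + (if q.1 = [] ∨ q.2 = [] then 0 else 1)) = k)

lemma mem_SP {q : List ℕ × List ℕ} {n k : ℕ} (hn : 1 ≤ n) :
    q ∈ SP n k ↔ cat q.1 ∧ cat q.2 ∧ q.1.length + q.2.length = n - 1 ∧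
      1 + (desc q.1 + desc q.2 + (if q.1 = [] ∨ q.2 = [] then 0 else 1)) = k := by
  rw [SP, Finset.mem_filter, Finset.mem_product]
  constructor
  · exact fun h => h.2
  · intro h
    exact ⟨⟨mem_allLe (by omega) h.1, mem_allLe (by omega) h.2.1⟩, h⟩


lemma mem_takeWhile_ne : ∀ {l : List ℕ} {x : ℕ}, x ∈ l.takeWhile (· != 0) → x ≠ 0
  | [], x, h => by simp at h
  | a :: t, x, h => by
    by_cases ha : a = 0
    · subst ha
      rw [List.takeWhile_cons_of_neg (by simp)] at h
      simp at h
    · rw [List.takeWhile_cons_of_pos (by simpa using ha)] at h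
      rcases List.mem_cons.mp h with rfl | h
      · exact ha
      · exact mem_takeWhile_ne h

lemma headD_dropWhile : ∀ l : List ℕ, (l.dropWhile (· != 0)).headD 0 = 0
  | [] => rfl
  | a :: t => by
    by_cases ha : a = 0
    · subst ha
      rw [List.dropWhile_cons_of_neg (by simp)]
      rfl
    · rw [List.dropWhile_cons_of_pos (by simpa using ha)]
      exact headD_dropWhile t

lemma cat_cons_zero {s : List ℕ} (hc : cat (0 :: s)) :
    s.Chain' (fun a b => b ≤ a + 1) ∧ ∀ y ∈ s.head?, y ≤ 1 := by
  have := List.isChain_cons.mp hc.1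
  exact ⟨this.2, fun y hy => by simpa using this.1 y hy⟩

lemma phi_mem {n k : ℕ} (hn : 1 ≤ n) {w : List ℕ} (hw : w ∈ CWf n k) :
    ((w.tail.takeWhile (· != 0)).map (· - 1), w.tail.dropWhile (· != 0)) ∈ SP n k := by
  obtain ⟨hl, hc, hk⟩ := mem_CWf.mp hw
  obtain ⟨s, rfl⟩ : ∃ s, w = 0 :: s := by
    cases w with
    | nil => simp at hl; omega
    | cons a t => exact ⟨t, by have := hc.2; simp at this; rw [this]⟩
  simp only [List.tail_cons]
  set p := s.takeWhile (· != 0) with hp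
  set v := s.dropWhile (· != 0) with hv
  have hpv : p ++ v = s := List.takeWhile_append_dropWhile
  have hpne : ∀ x ∈ p, x ≠ 0 := fun x hx => mem_takeWhile_ne hx
  have hs := cat_cons_zero hc
  have hcpv : p.Chain' (fun a b => b ≤ a + 1) ∧ v.Chain' (fun a b => b ≤ a + 1) := by
    have h2 := hs.1
    rw [← hpv] at h2
    have := List.isChain_append.mp h2
    exact ⟨this.1, this.2.1⟩
  have hvh : v.headD 0 = 0 := headD_dropWhile s
  have hph : p = [] ∨ ∃ t', p = 1 :: t' := by
    cases s with
    | nil => left; rfl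
    | cons a t =>
      have ha1 : a ≤ 1 := hs.2 a (by simp)
      by_cases ha : a = 0
      · left; rw [hp, ha]; rw [List.takeWhile_cons_of_neg (by simp)]
      · right
        have : a = 1 := by omega
        subst this
        exact ⟨t.takeWhile (· != 0), by rw [hp, List.takeWhile_cons_of_pos (by simp)]⟩
  have hucat : cat (p.map (· - 1)) := by
    constructor
    · rw [List.Chain', List.isChain_map]
      exact hcpv.1.imp (fun a b hab => by omega)
    · rcases hph with h | ⟨t', h⟩ <;> rw [h] <;> simp
  refine (mem_SP hn).mpr ⟨hucat, ⟨hcpv.2, hvh⟩, ?_, ?_⟩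
  · have : p.length + v.length = s.length := by rw [← hpv]; simp
    simp only [List.length_map]
    rw [this]
    simp only [List.length_cons] at hl
    omega
  · have hdw : desc (0 :: s) = desc s := by
      rw [desc_cons]; simp
    have hds : desc s = desc p + desc v + (if p = [] ∨ v = [] then 0 else 1) := by
      rw [← hpv]; exact desc_append p v hpne hvh
    have hdu : desc (p.map (· - 1)) = desc p := desc_map_sub p hpne
    have hnil : (p.map (· - 1)) = [] ↔ p = [] := by simp
    dsimp only
    simp only [hdu, hnil]
    rw [hdw, hds] at hk
    omega

lemma psi_mem {n k : ℕ} (hn : 1 ≤ n) {q : List ℕ × List ℕ} (hq : q ∈ SP n k) :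
    (0 :: (q.1.map (· + 1) ++ q.2)) ∈ CWf n k := by
  obtain ⟨hcu, hcv, hlen, hruns⟩ := (mem_SP hn).mp hq
  have hmapne : ∀ x ∈ q.1.map (· + 1), x ≠ 0 := by
    intro x hx
    simp only [List.mem_map] at hx
    obtain ⟨a, _, rfl⟩ := hx
    omega
  refine mem_CWf.mpr ⟨?_, ⟨?_, rfl⟩, ?_⟩
  · simp only [List.length_cons, List.length_append, List.length_map]
    omega
  · rw [List.Chain', List.isChain_cons]
    constructor
    · intro y hy
      rcases hu : q.1 with _ | ⟨e, u'⟩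
      · rw [hu] at hy
        simp only [List.map_nil, List.nil_append] at hy
        rcases hv : q.2 with _ | ⟨b, t⟩
        · rw [hv] at hy; simp at hy
        · rw [hv] at hy
          simp only [List.head?_cons, Option.mem_def, Option.some.injEq] at hy
          have : b = 0 := by have := hcv.2; rw [hv] at this; simpa using this
          omega
      · rw [hu] at hy
        have he : e = 0 := by have := hcu.2; rw [hu] at this; simpa using this
        simp only [List.map_cons, List.cons_append, List.head?_cons, Option.mem_def,
          Option.some.injEq] at hy
        omega
    · rw [List.isChain_append]
      refine ⟨?_, hcv.1, ?_⟩
      · rw [List.isChain_map]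
        exact hcu.1.imp (fun a b hab => by omega)
      · intro x hx y hy
        have hy0 : y = 0 := by
          rcases hv : q.2 with _ | ⟨b, t⟩
          · rw [hv] at hy; simp at hy
          · rw [hv] at hy
            simp only [List.head?_cons, Option.mem_def, Option.some.injEq] at hy
            have : b = 0 := by have := hcv.2; rw [hv] at this; simpa using this
            omega
        omega
  · have hd1 : desc (0 :: (q.1.map (· + 1) ++ q.2)) = desc (q.1.map (· + 1) ++ q.2) := by
      rw [desc_cons]; simp
    have hd2 : desc (q.1.map (· + 1) ++ q.2) =
        desc (q.1.map (· + 1)) + desc q.2 +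
          (if q.1.map (· + 1) = [] ∨ q.2 = [] then 0 else 1) :=
      desc_append _ _ hmapne hcv.2
    have hd3 : desc (q.1.map (· + 1)) = desc q.1 := desc_map_add q.1
    have hnil : (q.1.map (· + 1)) = [] ↔ q.1 = [] := by simp
    simp only [hd1, hd2, hd3, hnil]
    omega

lemma takeWhile_v_eq_nil {v : List ℕ} (hv : v.headD 0 = 0) : v.takeWhile (· != 0) = [] := by
  cases v with
  | nil => rfl
  | cons b t =>
    have : b = 0 := by simpa using hv
    subst this
    rw [List.takeWhile_cons_of_neg (by simp)]

lemma dropWhile_v_eq {v : List ℕ} (hv : v.headD 0 = 0) : v.dropWhile (· != 0) = v := by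
  cases v with
  | nil => rfl
  | cons b t =>
    have : b = 0 := by simpa using hv
    subst this
    rw [List.dropWhile_cons_of_neg (by simp)]

lemma c_eq_SP {n k : ℕ} (hn : 1 ≤ n) : c n k = (SP n k).card := by
  refine Finset.card_nbij'
    (i := fun w => ((w.tail.takeWhile (· != 0)).map (· - 1), w.tail.dropWhile (· != 0)))
    (j := fun q => 0 :: (q.1.map (· + 1) ++ q.2)) ?_ ?_ ?_ ?_
  · intro w hw
    exact phi_mem hn hw
  · intro q hq
    exact psi_mem hn hq

  · intro w hw
    obtain ⟨hl, hc, _⟩ := mem_CWf.mp hw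
    obtain ⟨s, rfl⟩ : ∃ s, w = 0 :: s := by
      cases w with
      | nil => simp at hl; omega
      | cons a t => exact ⟨t, by have := hc.2; simp at this; rw [this]⟩
    simp only [List.tail_cons, List.cons.injEq, true_and]
    rw [List.map_map]
    have : (s.takeWhile (· != 0)).map ((· + 1) ∘ (· - 1)) = s.takeWhile (· != 0) := by
      rw [List.map_congr_left (g := id) ?_, List.map_id]
      intro x hx
      have := mem_takeWhile_ne hx
      simp only [Function.comp_apply, id_eq]
      omega
    rw [this, List.takeWhile_append_dropWhile]
  · intro q hq
    obtain ⟨hcu, hcv, _, _⟩ := (mem_SP hn).mp hq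
    simp only [List.tail_cons]
    have ht : (q.1.map (· + 1) ++ q.2).takeWhile (· != 0) = q.1.map (· + 1) := by
      rw [List.takeWhile_append_of_pos (fun a ha => by
        obtain ⟨x, _, rfl⟩ := List.mem_map.mp ha; simp)]
      rw [takeWhile_v_eq_nil hcv.2, List.append_nil]
    have hd : (q.1.map (· + 1) ++ q.2).dropWhile (· != 0) = q.2 := by
      rw [List.dropWhile_append_of_pos (fun a ha => by
        obtain ⟨x, _, rfl⟩ := List.mem_map.mp ha; simp)]
      exact dropWhile_v_eq hcv.2
    rw [ht, hd, List.map_map]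
    have : q.1.map ((· - 1) ∘ (· + 1)) = q.1 := by
      rw [List.map_congr_left (g := id) ?_, List.map_id]
      intro x _
      simp
    rw [this]


lemma card_erase_nil (a i : ℕ) : ((CWf a i).erase []).card = c' a i := by
  rcases Nat.eq_zero_or_pos a with rfl | ha
  · have : (CWf 0 i).erase [] = ∅ := by
      rw [Finset.eq_empty_iff_forall_notMem]
      intro q hq
      have h1 := Finset.ne_of_mem_erase hq
      have h2 := mem_CWf.mp (Finset.mem_of_mem_erase hq)
      exact h1 (List.eq_nil_of_length_eq_zero h2.1)
    rw [this]
    simp [c']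
  · have : ([] : List ℕ) ∉ CWf a i := by
      intro h
      have := (mem_CWf.mp h).1
      simp at this
      omega
    rw [Finset.erase_eq_of_notMem this, c', if_neg (by omega)]
    rfl

lemma P1 {n k : ℕ} (hn : 1 ≤ n) :
    ((SP n k).filter (fun q => q.1 = [])).filter (fun q => q.2 = []) =
      if n = 1 ∧ k = 1 then {(([] : List ℕ), ([] : List ℕ))} else ∅ := by
  by_cases hcase : n = 1 ∧ k = 1
  · rw [if_pos hcase]
    ext q
    simp only [Finset.mem_filter, Finset.mem_singleton]
    constructor
    · rintro ⟨⟨_, h1⟩, h2⟩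
      exact Prod.ext_iff.mpr ⟨h1, h2⟩
    · rintro rfl
      obtain ⟨rfl, rfl⟩ := hcase
      refine ⟨⟨(mem_SP hn).mpr ⟨cat_nil, cat_nil, ?_, ?_⟩, rfl⟩, rfl⟩ <;> simp [desc]
  · rw [if_neg hcase]
    ext q
    simp only [Finset.mem_filter, Finset.notMem_empty, iff_false]
    rintro ⟨⟨hq, h1⟩, h2⟩
    obtain ⟨_, _, hlen, hruns⟩ := (mem_SP hn).mp hq
    rw [h1, h2] at hlen hruns
    simp [desc] at hlen hruns
    exact hcase ⟨by omega, by omega⟩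

lemma P2 {n k : ℕ} (hn : 1 ≤ n) :
    (((SP n k).filter (fun q => q.1 = [])).filter (fun q => ¬ q.2 = [])).card =
      c' (n-1) k := by
  by_cases hn1 : n = 1
  · subst hn1
    rw [show (1 : ℕ) - 1 = 0 from rfl, c', if_pos rfl]
    rw [Finset.card_eq_zero, Finset.eq_empty_iff_forall_notMem]
    rintro q hq
    rw [Finset.mem_filter, Finset.mem_filter] at hq
    obtain ⟨⟨hq', h1⟩, h2⟩ := hq
    obtain ⟨_, _, hlen, _⟩ := (mem_SP hn).mp hq'
    rw [h1] at hlen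
    simp at hlen
    exact h2 hlen
  · have hn2 : 2 ≤ n := by omega
    rw [c', if_neg (by omega)]
    rw [show c (n-1) k = (CWf (n-1) k).card from rfl]
    refine Finset.card_nbij' (i := fun q => q.2) (j := fun v => (([] : List ℕ), v)) ?_ ?_ ?_ ?_
    · intro q hq
      rw [Finset.mem_coe, Finset.mem_filter, Finset.mem_filter] at hq
      obtain ⟨⟨hq', h1⟩, h2⟩ := hq
      obtain ⟨_, hc2, hlen, hruns⟩ := (mem_SP hn).mp hq'
      rw [h1] at hlen hruns
      refine mem_CWf.mpr ⟨by simpa using hlen, hc2, ?_⟩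
      simp only [true_or, if_pos] at hruns
      simpa [desc] using hruns
    · intro v hv
      obtain ⟨hlv, hcv, hrv⟩ := mem_CWf.mp hv
      rw [Finset.mem_coe, Finset.mem_filter, Finset.mem_filter]
      refine ⟨⟨(mem_SP hn).mpr ⟨cat_nil, hcv, by simpa using hlv, by simpa [desc] using hrv⟩, rfl⟩, ?_⟩
      intro hveq
      dsimp only at hveq
      rw [hveq] at hlv
      simp at hlv
      omega
    · intro q hq
      rw [Finset.mem_coe, Finset.mem_filter, Finset.mem_filter] at hq
      exact Prod.ext_iff.mpr ⟨hq.1.2.symm, rfl⟩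
    · intro v _
      rfl

lemma P3 {n k : ℕ} (hn : 1 ≤ n) :
    (((SP n k).filter (fun q => ¬ q.1 = [])).filter (fun q => q.2 = [])).card =
      c' (n-1) k := by
  by_cases hn1 : n = 1
  · subst hn1
    rw [show (1 : ℕ) - 1 = 0 from rfl, c', if_pos rfl]
    rw [Finset.card_eq_zero, Finset.eq_empty_iff_forall_notMem]
    rintro q hq
    rw [Finset.mem_filter, Finset.mem_filter] at hq
    obtain ⟨⟨hq', h1⟩, h2⟩ := hq
    obtain ⟨_, _, hlen, _⟩ := (mem_SP hn).mp hq'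
    rw [h2] at hlen
    simp at hlen
    exact h1 hlen
  · have hn2 : 2 ≤ n := by omega
    rw [c', if_neg (by omega)]
    rw [show c (n-1) k = (CWf (n-1) k).card from rfl]
    refine Finset.card_nbij' (i := fun q => q.1) (j := fun u => (u, ([] : List ℕ))) ?_ ?_ ?_ ?_
    · intro q hq
      rw [Finset.mem_coe, Finset.mem_filter, Finset.mem_filter] at hq
      obtain ⟨⟨hq', h1⟩, h2⟩ := hq
      obtain ⟨hc1, _, hlen, hruns⟩ := (mem_SP hn).mp hq'
      rw [h2] at hlen hruns
      refine mem_CWf.mpr ⟨by simpa using hlen, hc1, ?_⟩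
      simp only [or_true, if_pos] at hruns
      simp only [desc, add_zero] at hruns
      simpa using hruns
    · intro u hu
      obtain ⟨hlu, hcu, hru⟩ := mem_CWf.mp hu
      rw [Finset.mem_coe, Finset.mem_filter, Finset.mem_filter]
      refine ⟨⟨(mem_SP hn).mpr ⟨hcu, cat_nil, by simpa using hlu, ?_⟩, ?_⟩, rfl⟩
      · simp only [or_true, if_pos]
        simp only [desc, add_zero]
        simpa using hru
      · intro hueq
        dsimp only at hueq
        rw [hueq] at hlu
        simp at hlu
        omega
    · intro q hq
      rw [Finset.mem_coe, Finset.mem_filter, Finset.mem_filter] at hq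
      exact Prod.ext_iff.mpr ⟨rfl, hq.2.symm⟩
    · intro u _
      rfl

lemma P4 {n k : ℕ} (hn : 1 ≤ n) :
    ((SP n k).filter (fun q => ¬ q.1 = [])).filter (fun q => ¬ q.2 = []) =
      (Finset.HasAntidiagonal.antidiagonal (n-1) ×ˢ Finset.HasAntidiagonal.antidiagonal k).biUnion
        (fun x => ((CWf x.1.1 x.2.1).erase []) ×ˢ ((CWf x.1.2 x.2.2).erase [])) := by
  ext q
  rw [Finset.mem_filter, Finset.mem_filter, Finset.mem_biUnion]
  constructor
  · rintro ⟨⟨hq, h1⟩, h2⟩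
    obtain ⟨hc1, hc2, hlen, hruns⟩ := (mem_SP hn).mp hq
    rw [if_neg (by tauto)] at hruns
    refine ⟨((q.1.length, q.2.length), (1 + desc q.1, 1 + desc q.2)), ?_, ?_⟩
    · rw [Finset.mem_product]
      constructor
      · rw [Finset.HasAntidiagonal.mem_antidiagonal]; exact hlen
      · rw [Finset.HasAntidiagonal.mem_antidiagonal]; dsimp only; omega
    · rw [Finset.mem_product]
      exact ⟨Finset.mem_erase.mpr ⟨h1, mem_CWf.mpr ⟨rfl, hc1, rfl⟩⟩,
        Finset.mem_erase.mpr ⟨h2, mem_CWf.mpr ⟨rfl, hc2, rfl⟩⟩⟩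
  · rintro ⟨x, hx, hq⟩
    rw [Finset.mem_product] at hx hq
    obtain ⟨hx1, hx2⟩ := hx
    rw [Finset.HasAntidiagonal.mem_antidiagonal] at hx1 hx2
    obtain ⟨hq1, hq2⟩ := hq
    have h1 := Finset.ne_of_mem_erase hq1
    have h2 := Finset.ne_of_mem_erase hq2
    obtain ⟨hl1, hc1, hr1⟩ := mem_CWf.mp (Finset.mem_of_mem_erase hq1)
    obtain ⟨hl2, hc2, hr2⟩ := mem_CWf.mp (Finset.mem_of_mem_erase hq2)
    refine ⟨⟨(mem_SP hn).mpr ⟨hc1, hc2, by omega, ?_⟩, h1⟩, h2⟩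
    rw [if_neg (by tauto)]
    omega

lemma card_SP {n k : ℕ} (hn : 1 ≤ n) :
    (SP n k).card = (if n = 1 ∧ k = 1 then 1 else 0) + 2 * c' (n-1) k +
      ∑ ab ∈ Finset.HasAntidiagonal.antidiagonal (n-1), ∑ ij ∈ Finset.HasAntidiagonal.antidiagonal k,
        c' ab.1 ij.1 * c' ab.2 ij.2 := by
  classical
  have hsplit1 := Finset.card_filter_add_card_filter_not
    (s := SP n k) (p := fun q => q.1 = [])
  have hsplit2 := Finset.card_filter_add_card_filter_not
    (s := (SP n k).filter (fun q => q.1 = [])) (p := fun q => q.2 = [])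
  have hsplit3 := Finset.card_filter_add_card_filter_not
    (s := (SP n k).filter (fun q => ¬ q.1 = [])) (p := fun q => q.2 = [])
  have hP1 : (((SP n k).filter (fun q => q.1 = [])).filter (fun q => q.2 = [])).card =
      (if n = 1 ∧ k = 1 then 1 else 0) := by
    rw [P1 hn]
    by_cases hcase : n = 1 ∧ k = 1 <;> simp [hcase]
  have hP2 := P2 (n := n) (k := k) hn
  have hP3 := P3 (n := n) (k := k) hn
  have hP4 : (((SP n k).filter (fun q => ¬ q.1 = [])).filter (fun q => ¬ q.2 = [])).card =
      ∑ ab ∈ Finset.HasAntidiagonal.antidiagonal (n-1), ∑ ij ∈ Finset.HasAntidiagonal.antidiagonal k,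
        c' ab.1 ij.1 * c' ab.2 ij.2 := by
    rw [P4 hn]
    rw [Finset.card_biUnion]
    · rw [Finset.sum_product]
      refine Finset.sum_congr rfl (fun ab _ => ?_)
      refine Finset.sum_congr rfl (fun ij _ => ?_)
      rw [Finset.card_product, card_erase_nil, card_erase_nil]
    · intro x hx y hy hxy
      rw [Function.onFun, Finset.disjoint_left]
      intro q hqx hqy
      rw [Finset.mem_product] at hqx hqy
      obtain ⟨hl1, _, hr1⟩ := mem_CWf.mp (Finset.mem_of_mem_erase hqx.1)
      obtain ⟨hl2, _, hr2⟩ := mem_CWf.mp (Finset.mem_of_mem_erase hqx.2)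
      obtain ⟨hl1', _, hr1'⟩ := mem_CWf.mp (Finset.mem_of_mem_erase hqy.1)
      obtain ⟨hl2', _, hr2'⟩ := mem_CWf.mp (Finset.mem_of_mem_erase hqy.2)
      apply hxy
      have e1 : x.1.1 = y.1.1 := by omega
      have e2 : x.1.2 = y.1.2 := by omega
      have e3 : x.2.1 = y.2.1 := by omega
      have e4 : x.2.2 = y.2.2 := by omega
      exact Prod.ext_iff.mpr ⟨Prod.ext_iff.mpr ⟨e1, e2⟩, Prod.ext_iff.mpr ⟨e3, e4⟩⟩
  omega

lemma c_recurrence (n k : ℕ) :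
    c' n k = (if n = 1 ∧ k = 1 then 1 else 0) + 2 * c' (n-1) k +
      ∑ ab ∈ Finset.HasAntidiagonal.antidiagonal (n-1), ∑ ij ∈ Finset.HasAntidiagonal.antidiagonal k,
        c' ab.1 ij.1 * c' ab.2 ij.2 := by
  rcases Nat.eq_zero_or_pos n with rfl | hn
  · simp [c']
  · rw [c', if_neg (by omega), c_eq_SP hn, card_SP hn]


lemma finsupp_apply0 (n k : ℕ) :
    (Finsupp.single (0 : Fin 2) n + Finsupp.single (1 : Fin 2) k) (0 : Fin 2) = n := by
  rw [Finsupp.add_apply, Finsupp.single_eq_same, Finsupp.single_eq_of_ne (by decide), add_zero]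

lemma finsupp_apply1 (n k : ℕ) :
    (Finsupp.single (0 : Fin 2) n + Finsupp.single (1 : Fin 2) k) (1 : Fin 2) = k := by
  rw [Finsupp.add_apply, Finsupp.single_eq_same, Finsupp.single_eq_of_ne (by decide), zero_add]

lemma finsupp_decomp (d : Fin 2 →₀ ℕ) :
    d = Finsupp.single 0 (d 0) + Finsupp.single 1 (d 1) := by
  ext i
  fin_cases i <;> simp [Finsupp.single_apply]

lemma sum_antid (m k : ℕ) (f : (Fin 2 →₀ ℕ) → (Fin 2 →₀ ℕ) → ℚ) :
    ∑ p ∈ Finset.HasAntidiagonal.antidiagonal (Finsupp.single (0 : Fin 2) m + Finsupp.single 1 k),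
      f p.1 p.2 =
    ∑ ab ∈ Finset.HasAntidiagonal.antidiagonal m, ∑ ij ∈ Finset.HasAntidiagonal.antidiagonal k,
      f (Finsupp.single 0 ab.1 + Finsupp.single 1 ij.1)
        (Finsupp.single 0 ab.2 + Finsupp.single 1 ij.2) := by
  rw [← Finset.sum_product']
  refine Finset.sum_nbij' (i := fun p => ((p.1 0, p.2 0), (p.1 1, p.2 1)))
    (j := fun x => (Finsupp.single 0 x.1.1 + Finsupp.single 1 x.2.1,
                    Finsupp.single 0 x.1.2 + Finsupp.single 1 x.2.2)) ?_ ?_ ?_ ?_ ?_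
  · intro p hp
    rw [Finset.HasAntidiagonal.mem_antidiagonal] at hp
    rw [Finset.mem_product, Finset.HasAntidiagonal.mem_antidiagonal, Finset.HasAntidiagonal.mem_antidiagonal]
    constructor
    · have := congrArg (fun g : Fin 2 →₀ ℕ => g 0) hp
      simpa [finsupp_apply0] using this
    · have := congrArg (fun g : Fin 2 →₀ ℕ => g 1) hp
      simpa [finsupp_apply1] using this
  · intro x hx
    rw [Finset.mem_product, Finset.HasAntidiagonal.mem_antidiagonal, Finset.HasAntidiagonal.mem_antidiagonal] at hx
    rw [Finset.HasAntidiagonal.mem_antidiagonal]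
    ext i
    fin_cases i <;> simp [Finsupp.single_apply] <;> omega
  · intro p hp
    dsimp only
    rw [← finsupp_decomp, ← finsupp_decomp]
  · intro x hx
    dsimp only
    rw [finsupp_apply0, finsupp_apply1, finsupp_apply0, finsupp_apply1]
  · intro p hp
    dsimp only
    rw [← finsupp_decomp, ← finsupp_decomp]

end CatAux

open CatAux in
/-- The bivariate generating function `W(x,y)` of nonempty Catalan words by length and
number of runs of weak ascents satisfies `W = xy + 2xW + xW²`. -/
theorem wAscRuns_gf_equation (F : MvPowerSeries (Fin 2) ℚ)
    (h0 : ∀ k : ℕ, MvPowerSeries.coeff (Finsupp.single 1 k) F = 0)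
    (h : ∀ n k : ℕ, 1 ≤ n →
      MvPowerSeries.coeff (Finsupp.single 0 n + Finsupp.single 1 k) F =
        Nat.card {w : List ℕ | w ∈ CatalanWord n ∧ wAscRuns w = k}) :
    F = MvPowerSeries.X 0 * MvPowerSeries.X 1
      + 2 * MvPowerSeries.X 0 * F
      + MvPowerSeries.X 0 * F ^ 2 := by
  classical
  have hF : ∀ n k : ℕ,
      MvPowerSeries.coeff (Finsupp.single 0 n + Finsupp.single 1 k) F = (c' n k : ℚ) := by
    intro n k
    rcases Nat.eq_zero_or_pos n with rfl | hn
    · rw [show (Finsupp.single (0 : Fin 2) 0 + Finsupp.single 1 k) = Finsupp.single 1 k by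
        simp, h0]
      simp [c']
    · rw [h n k hn]
      have hseteq : {w : List ℕ | w ∈ CatalanWord n ∧ wAscRuns w = k} = ↑(CWf n k) := by
        ext w
        rw [Set.mem_setOf_eq, Finset.mem_coe, mem_catalanWord, wAscRuns_eq, mem_CWf]
        tauto
      rw [hseteq, Nat.card_coe_set_eq, Set.ncard_coe_finset]
      rw [show c' n k = c n k by rw [c', if_neg (by omega)]]
      rfl
  have hXF : ∀ (n k : ℕ) (G : MvPowerSeries (Fin 2) ℚ),
      MvPowerSeries.coeff (Finsupp.single 0 n + Finsupp.single 1 k)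
        (MvPowerSeries.X 0 * G) =
      if n = 0 then 0 else
        MvPowerSeries.coeff (Finsupp.single 0 (n-1) + Finsupp.single 1 k) G := by
    intro n k G
    rw [MvPowerSeries.X_def, MvPowerSeries.coeff_monomial_mul]
    rcases Nat.eq_zero_or_pos n with rfl | hn
    · rw [if_neg, if_pos rfl]
      intro hle
      have := hle 0
      simp [Finsupp.single_apply] at this
    · have hidx : (Finsupp.single (0 : Fin 2) n + Finsupp.single 1 k) - Finsupp.single 0 1
          = Finsupp.single 0 (n-1) + Finsupp.single 1 k := by
        ext i
        fin_cases i <;> simp [Finsupp.tsub_apply, Finsupp.single_apply]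
      rw [if_pos, if_neg (by omega), one_mul, hidx]
      intro i
      fin_cases i <;> simp [Finsupp.single_apply] <;> omega
  apply MvPowerSeries.ext
  intro d
  obtain ⟨n, k, rfl⟩ : ∃ n k, d = Finsupp.single 0 n + Finsupp.single 1 k :=
    ⟨d 0, d 1, finsupp_decomp d⟩
  rw [map_add, map_add, hF]
  have hT1 : MvPowerSeries.coeff (Finsupp.single 0 n + Finsupp.single 1 k)
      (MvPowerSeries.X 0 * MvPowerSeries.X 1 : MvPowerSeries (Fin 2) ℚ) =
      if n = 1 ∧ k = 1 then 1 else 0 := by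
    rw [MvPowerSeries.X_def, MvPowerSeries.X_def, MvPowerSeries.monomial_mul_monomial, one_mul,
      MvPowerSeries.coeff_monomial]
    by_cases hc : n = 1 ∧ k = 1
    · obtain ⟨rfl, rfl⟩ := hc
      simp
    · rw [if_neg, if_neg hc]
      intro heq
      apply hc
      constructor
      · have := congrArg (fun g : Fin 2 →₀ ℕ => g 0) heq
        simpa [finsupp_apply0] using this
      · have := congrArg (fun g : Fin 2 →₀ ℕ => g 1) heq
        simpa [finsupp_apply1] using this
  have hT2 : MvPowerSeries.coeff (Finsupp.single 0 n + Finsupp.single 1 k)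
      (2 * MvPowerSeries.X 0 * F) =
      if n = 0 then 0 else 2 * (c' (n-1) k : ℚ) := by
    rw [mul_assoc, two_mul, map_add, hXF, hF]
    rcases Nat.eq_zero_or_pos n with rfl | hn
    · simp
    · rw [if_neg (by omega), if_neg (by omega)]
      ring
  have hT3 : MvPowerSeries.coeff (Finsupp.single 0 n + Finsupp.single 1 k)
      (MvPowerSeries.X 0 * F ^ 2) =
      if n = 0 then 0 else
        ∑ ab ∈ Finset.HasAntidiagonal.antidiagonal (n-1), ∑ ij ∈ Finset.HasAntidiagonal.antidiagonal k,
          (c' ab.1 ij.1 : ℚ) * (c' ab.2 ij.2 : ℚ) := by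
    rw [hXF]
    rcases Nat.eq_zero_or_pos n with rfl | hn
    · simp
    · rw [if_neg (by omega), if_neg (by omega), pow_two, MvPowerSeries.coeff_mul]
      rw [sum_antid (n-1) k (fun p q => MvPowerSeries.coeff p F * MvPowerSeries.coeff q F)]
      refine Finset.sum_congr rfl (fun ab _ => Finset.sum_congr rfl (fun ij _ => ?_))
      rw [hF, hF]
  rw [hT1, hT2, hT3]
  have hrec := c_recurrence n k
  rcases Nat.eq_zero_or_pos n with rfl | hn
  · simp [c']
  · have hn0 : ¬ n = 0 := by omega
    simp only [if_neg hn0]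
    have : (c' n k : ℚ) = ((if n = 1 ∧ k = 1 then 1 else 0) + 2 * c' (n-1) k +
        ∑ ab ∈ Finset.HasAntidiagonal.antidiagonal (n-1), ∑ ij ∈ Finset.HasAntidiagonal.antidiagonal k,
          c' ab.1 ij.1 * c' ab.2 ij.2 : ℕ) := by exact_mod_cast congrArg (Nat.cast : ℕ → ℚ) hrec
    rw [this]
    split_ifs with hc <;> push_cast <;> ring
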